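/- arXiv:1108.1851 — 2 statements merged into one kernel-verified Lean document; each statement's English description precedes it below -/
import Mathlib

section
/- Let d ≥ 1, let s_1, …, s_n ∈ ℝ^d be distinct points, and let 0 < ρ_1 < ρ_2. Then for every vector z ∈ ℝ^n, (1/ρ_2)·zᵀ Γ_n(ρ_2)⁻¹ z ≤ (1/ρ_1)·zᵀ Γ_n(ρ_1)⁻¹ z. (This is the paper's Lemma 1, monotonicity in ρ of the microergodic-parameter estimator ĉ_n(ρ) = zᵀΓ_n(ρ)⁻¹z/(nρ^{2ν}), in the case of Matérn smoothness ν = 1/2.) -/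
open Real Set MeasureTheory

noncomputable section KSaux

namespace KSaux

/-- The Glasser-type integrand. -/
def gla (a w : ℝ) : ℝ := Real.exp (-(w^2) - a^2/(4*w^2))

lemma gla_pos (a w : ℝ) : 0 < gla a w := Real.exp_pos _

lemma gla_le (a w : ℝ) : gla a w ≤ Real.exp (-(w^2)) := by
  apply Real.exp_le_exp.2
  have : (0:ℝ) ≤ a^2/(4*w^2) := by positivity
  linarith

lemma gla_meas (a : ℝ) : Measurable (gla a) := by
  apply Real.measurable_exp.comp
  fun_prop

lemma gla_integrableOn (a : ℝ) : IntegrableOn (gla a) (Ioi 0) := by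
  apply Integrable.mono' ((integrable_exp_neg_mul_sq one_pos).integrableOn (s := Ioi 0))
  · exact (gla_meas a).aestronglyMeasurable
  · filter_upwards with w
    rw [Real.norm_eq_abs, abs_of_pos (gla_pos a w)]
    simpa using gla_le a w

lemma refl_image {a : ℝ} (ha : 0 < a) : (fun w => a/(2*w)) '' Ioi 0 = Ioi 0 := by
  ext t
  constructor
  · rintro ⟨w, hw, rfl⟩
    exact div_pos ha (by simp at hw; linarith)
  · intro ht
    simp only [mem_Ioi] at ht
    refine ⟨a/(2*t), div_pos ha (by linarith), ?_⟩
    field_simp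

lemma refl_deriv {a : ℝ} (x : ℝ) (hx : x ∈ Ioi (0:ℝ)) :
    HasDerivWithinAt (fun w => a/(2*w)) (-(a/(2*x^2))) (Ioi 0) x := by
  simp only [mem_Ioi] at hx
  have h := ((hasDerivWithinAt_inv (ne_of_gt hx) (Ioi 0)).const_mul (a/2))
  have e1 : (fun w => a/(2*w)) = fun y => a / 2 * y⁻¹ := by
    ext w; rw [div_eq_mul_inv, mul_inv, div_eq_mul_inv]; ring
  have e2 : -(a/(2*x^2)) = a / 2 * -(x ^ 2)⁻¹ := by ring
  rw [e1, e2]; exact h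

lemma refl_injOn {a : ℝ} (ha : 0 < a) : InjOn (fun w => a/(2*w)) (Ioi 0) := by
  intro x hx y hy h
  simp only [mem_Ioi] at hx hy
  simp only at h
  rw [div_eq_div_iff (by linarith) (by linarith)] at h
  have := mul_left_cancel₀ (ne_of_gt ha) h
  linarith

lemma refl_pointwise {a : ℝ} (ha : 0 < a) {w : ℝ} (hw : w ∈ Ioi (0:ℝ)) :
    |(-(a/(2*w^2)))| • gla a (a/(2*w)) = a/(2*w^2) * gla a w := by
  simp only [mem_Ioi] at hw
  rw [abs_neg, abs_of_pos (by positivity), smul_eq_mul]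
  congr 1
  unfold gla
  congr 1
  field_simp
  ring

/-- Reflection identity. -/
lemma refl_int {a : ℝ} (ha : 0 < a) :
    ∫ w in Ioi (0:ℝ), gla a w = ∫ w in Ioi (0:ℝ), a/(2*w^2) * gla a w := by
  conv_lhs => rw [← refl_image ha]
  rw [integral_image_eq_integral_abs_deriv_smul measurableSet_Ioi
    (fun x hx => refl_deriv x hx) (refl_injOn ha)]
  exact setIntegral_congr_fun measurableSet_Ioi (fun w hw => refl_pointwise ha hw)

lemma refl_integrableOn {a : ℝ} (ha : 0 < a) :
    IntegrableOn (fun w => a/(2*w^2) * gla a w) (Ioi 0) := by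
  have h := (integrableOn_image_iff_integrableOn_abs_deriv_smul measurableSet_Ioi
    (fun x hx => refl_deriv (a := a) x hx) (refl_injOn ha) (gla a)).mp
  rw [refl_image ha] at h
  have h2 := h (gla_integrableOn a)
  exact h2.congr_fun (fun w hw => refl_pointwise ha hw) measurableSet_Ioi


lemma main_deriv {a : ℝ} (x : ℝ) (hx : x ∈ Ioi (0:ℝ)) :
    HasDerivWithinAt (fun w => w - a/(2*w)) (1 + a/(2*x^2)) (Ioi 0) x := by
  simp only [mem_Ioi] at hx
  have h := (hasDerivWithinAt_id x (Ioi 0)).sub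
    ((hasDerivWithinAt_inv (ne_of_gt hx) (Ioi 0)).const_mul (a/2))
  have e1 : (fun w => w - a/(2*w)) = id - fun y => a / 2 * y⁻¹ := by
    ext w; simp only [Pi.sub_apply, id]; ring
  have e2 : 1 + a/(2*x^2) = 1 - a / 2 * -(x ^ 2)⁻¹ := by ring
  rw [e1, e2]; exact h

lemma main_strictMono {a : ℝ} (ha : 0 < a) : StrictMonoOn (fun w => w - a/(2*w)) (Ioi 0) := by
  intro x hx y hy hxy
  simp only [mem_Ioi] at hx hy
  simp only
  have h1 : a/(2*y) < a/(2*x) := by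
    apply div_lt_div_of_pos_left ha (by linarith) (by linarith)
  linarith

lemma main_image {a : ℝ} (ha : 0 < a) : (fun w => w - a/(2*w)) '' Ioi 0 = univ := by
  apply eq_univ_of_forall
  intro t
  set s := Real.sqrt (t^2 + 2*a) with hs
  have hs2 : s^2 = t^2 + 2*a := Real.sq_sqrt (by positivity)
  have habs : |t| < s := by
    rw [← Real.sqrt_sq_eq_abs]
    exact Real.sqrt_lt_sqrt (sq_nonneg t) (by linarith)
  have hw : 0 < (t + s)/2 := by
    have := neg_abs_le t
    linarith
  refine ⟨(t + s)/2, hw, ?_⟩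
  simp only
  have hts : (0:ℝ) < t + s := by linarith
  have h2 : a/(2*((t+s)/2)) = a/(t+s) := by rw [mul_div_cancel₀]; norm_num
  rw [h2]
  field_simp
  nlinarith [hs2]

/-- The Glasser-type integral: `∫_{0}^{∞} exp (-w² - a²/(4w²)) dw = (√π/2) e^{-a}`. -/
lemma gla_int {a : ℝ} (ha : 0 ≤ a) :
    ∫ w in Ioi (0:ℝ), gla a w = Real.sqrt π / 2 * Real.exp (-a) := by
  rcases eq_or_lt_of_le ha with h0 | ha
  · subst h0
    have : ∀ w : ℝ, gla 0 w = Real.exp (-1*w^2) := by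
      intro w; unfold gla; congr 1; ring
    simp only [this]
    rw [integral_gaussian_Ioi 1]
    simp [Real.exp_zero]
  · have key : Real.sqrt π
        = ∫ w in Ioi (0:ℝ), (1 + a/(2*w^2)) * (Real.exp a * gla a w) := by
      have h1 : Real.sqrt π = ∫ t : ℝ, Real.exp (-1*t^2) := by
        rw [integral_gaussian 1]; norm_num
      rw [h1, ← setIntegral_univ, ← main_image ha,
        integral_image_eq_integral_abs_deriv_smul measurableSet_Ioi
          (fun x hx => main_deriv x hx) ((main_strictMono ha).injOn)]
      apply setIntegral_congr_fun measurableSet_Ioi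
      intro w hw
      simp only [mem_Ioi] at hw
      beta_reduce
      rw [abs_of_pos (by positivity), smul_eq_mul]
      congr 1
      unfold gla
      rw [← Real.exp_add]
      congr 1
      field_simp
      ring
    have hint1 : IntegrableOn (fun w => gla a w) (Ioi 0) := gla_integrableOn a
    have hint2 := refl_integrableOn ha
    have hsplit : ∀ w : ℝ, (1 + a/(2*w^2)) * (Real.exp a * gla a w)
        = Real.exp a * gla a w + Real.exp a * (a/(2*w^2) * gla a w) := by
      intro w; ring
    have h3 : Real.sqrt π = Real.exp a * (∫ w in Ioi (0:ℝ), gla a w)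
        + Real.exp a * (∫ w in Ioi (0:ℝ), gla a w) := by
      rw [key]
      simp only [hsplit]
      rw [integral_add ((hint1.const_mul _)) (hint2.const_mul _),
        integral_const_mul, integral_const_mul, ← refl_int ha]
    have hexp : Real.exp a ≠ 0 := Real.exp_ne_zero a
    calc ∫ w in Ioi (0:ℝ), gla a w
        = (Real.exp a * (∫ w in Ioi (0:ℝ), gla a w)
          + Real.exp a * (∫ w in Ioi (0:ℝ), gla a w)) / (2 * Real.exp a) := by
          field_simp; ring
      _ = Real.sqrt π / (2 * Real.exp a) := by rw [← h3]
      _ = Real.sqrt π / 2 * Real.exp (-a) := by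
          rw [Real.exp_neg]; field_simp


lemma sq_image {ρ : ℝ} (hρ : 0 < ρ) : (fun w => ρ^2*w^2) '' Ioi 0 = Ioi 0 := by
  ext v
  constructor
  · rintro ⟨w, hw, rfl⟩
    simp only [mem_Ioi] at hw ⊢
    positivity
  · intro hv
    simp only [mem_Ioi] at hv
    refine ⟨Real.sqrt v / ρ, mem_Ioi.2 (by positivity), ?_⟩
    simp only
    rw [div_pow, Real.sq_sqrt (le_of_lt hv)]
    field_simp

lemma sq_deriv {ρ : ℝ} (x : ℝ) (hx : x ∈ Ioi (0:ℝ)) :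
    HasDerivWithinAt (fun w => ρ^2*w^2) (2*ρ^2*x) (Ioi 0) x := by
  have h := ((hasDerivWithinAt_id x (Ioi 0)).pow 2).const_mul (ρ^2)
  refine h.congr_deriv ?_
  simp only [id]
  norm_num
  ring

lemma sq_injOn {ρ : ℝ} (hρ : 0 < ρ) : InjOn (fun w => ρ^2*w^2) (Ioi 0) := by
  intro x hx y hy h
  simp only [mem_Ioi] at hx hy
  simp only at h
  have h2 := mul_left_cancel₀ (by positivity : (ρ:ℝ)^2 ≠ 0) h
  nlinarith [h2]

lemma sq_pointwise {ρ τ : ℝ} (hρ : 0 < ρ) {w : ℝ} (hw : w ∈ Ioi (0:ℝ)) :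
    |2*ρ^2*w| • (Real.exp (-(ρ^2*w^2)/ρ^2) / Real.sqrt (π*(ρ^2*w^2))
      * Real.exp (-τ^2/(4*(ρ^2*w^2))))
    = (2*ρ/Real.sqrt π) * gla (τ/ρ) w := by
  simp only [mem_Ioi] at hw
  have hπ : (0:ℝ) < Real.sqrt π := Real.sqrt_pos.2 Real.pi_pos
  have h1 : Real.sqrt (π*(ρ^2*w^2)) = Real.sqrt π * (ρ*w) := by
    rw [show π*(ρ^2*w^2) = π*(ρ*w)^2 by ring, Real.sqrt_mul Real.pi_pos.le,
      Real.sqrt_sq (by positivity)]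
  have h2 : -(ρ^2*w^2)/ρ^2 = -(w^2) := by field_simp
  have h3 : -τ^2/(4*(ρ^2*w^2)) = -(τ/ρ)^2/(4*w^2) := by
    have h : τ^2/(4*(ρ^2*w^2)) = (τ/ρ)^2/(4*w^2) := by
      rw [div_pow, div_div]
      congr 1
      ring
    rw [neg_div, neg_div, h]
  rw [h1, h2, h3, abs_of_pos (by positivity), smul_eq_mul]
  unfold gla
  rw [show -(w ^ 2) - (τ/ρ) ^ 2 / (4 * w ^ 2) = -(w^2) + -(τ/ρ)^2/(4*w^2) by ring,
    Real.exp_add]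
  field_simp

/-- Subordination formula:
`∫₀^∞ e^{-v/ρ²}/√(πv) · e^{-τ²/(4v)} dv = ρ e^{-τ/ρ}`. -/
lemma subord {ρ τ : ℝ} (hρ : 0 < ρ) (hτ : 0 ≤ τ) :
    ∫ v in Ioi (0:ℝ), Real.exp (-v/ρ^2) / Real.sqrt (π*v) * Real.exp (-τ^2/(4*v))
      = ρ * Real.exp (-τ/ρ) := by
  have hπ : (0:ℝ) < Real.sqrt π := Real.sqrt_pos.2 Real.pi_pos
  conv_lhs => rw [← sq_image hρ]
  rw [integral_image_eq_integral_abs_deriv_smul measurableSet_Ioi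
    (fun x hx => sq_deriv x hx) (sq_injOn hρ)]
  rw [setIntegral_congr_fun measurableSet_Ioi
    (fun w hw => sq_pointwise hρ (τ := τ) hw)]
  rw [integral_const_mul, gla_int (by positivity)]
  rw [show -(τ/ρ) = -τ/ρ by ring]
  field_simp

lemma subord_integrableOn {ρ : ℝ} (τ : ℝ) (hρ : 0 < ρ) :
    IntegrableOn (fun v => Real.exp (-v/ρ^2) / Real.sqrt (π*v)
      * Real.exp (-τ^2/(4*v))) (Ioi 0) := by
  have h := (integrableOn_image_iff_integrableOn_abs_deriv_smul measurableSet_Ioi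
    (fun x hx => sq_deriv (ρ := ρ) x hx) (sq_injOn hρ)
    (fun v => Real.exp (-v/ρ^2) / Real.sqrt (π*v) * Real.exp (-τ^2/(4*v))))
  rw [sq_image hρ] at h
  rw [h]
  apply IntegrableOn.congr_fun (f := fun w => (2*ρ/Real.sqrt π) * gla (τ/ρ) w)
  · exact (gla_integrableOn (τ/ρ)).const_mul _
  · exact fun w hw => (sq_pointwise hρ hw).symm
  · exact measurableSet_Ioi



section Gauss

open Complex RealInnerProductSpace

variable {d : ℕ}

/-- The additive character `v ↦ exp(i ⟪x, v⟫)` as a `MonoidHom` on `Multiplicative`. -/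
def char (x : EuclideanSpace ℝ (Fin d)) :
    Multiplicative (EuclideanSpace ℝ (Fin d)) →* ℂ where
  toFun v := Complex.exp (Complex.I * ((inner ℝ x (Multiplicative.toAdd v) : ℝ) : ℂ))
  map_one' := by simp
  map_mul' a b := by
    simp only [toAdd_mul, inner_add_right]
    push_cast
    rw [mul_add, Complex.exp_add]

lemma char_apply (x w : EuclideanSpace ℝ (Fin d)) :
    char x (Multiplicative.ofAdd w) = Complex.exp (Complex.I * ((inner ℝ x w : ℝ) : ℂ)) := rfl

lemma char_injective : Function.Injective (char (d := d)) := by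
  intro x y h
  by_contra hxy
  have hne : x - y ≠ 0 := sub_ne_zero.2 hxy
  have hnorm : (0:ℝ) < ‖x - y‖^2 := pow_pos (norm_pos_iff.mpr hne) 2
  set w : EuclideanSpace ℝ (Fin d) := (π / ‖x - y‖^2) • (x - y) with hw
  have hx : char x (Multiplicative.ofAdd w) = char y (Multiplicative.ofAdd w) := by rw [h]
  rw [char_apply, char_apply] at hx
  have hinner : (inner ℝ (x - y) w : ℝ) = π := by
    rw [hw, real_inner_smul_right, real_inner_self_eq_norm_sq]
    field_simp
  have hab : (inner ℝ x w : ℝ) - (inner ℝ y w : ℝ) = π := by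
    rw [← inner_sub_left]; exact hinner
  have h1 : Complex.exp (Complex.I * ((inner ℝ x w : ℝ) : ℂ)
      - Complex.I * ((inner ℝ y w : ℝ) : ℂ)) = 1 := by
    rw [Complex.exp_sub, hx, div_self (Complex.exp_ne_zero _)]
  rw [← mul_sub, show (((inner ℝ x w : ℝ) : ℂ) - ((inner ℝ y w : ℝ) : ℂ)) = (π : ℂ) by
      rw [← Complex.ofReal_sub, hab], mul_comm, Complex.exp_pi_mul_I] at h1
  norm_num at h1

/-- The trigonometric sum `F(v) = ∑ zᵢ exp(i ⟪xᵢ, v⟫)`. -/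
def charSum {n : ℕ} (x : Fin n → EuclideanSpace ℝ (Fin d)) (z : Fin n → ℝ)
    (v : EuclideanSpace ℝ (Fin d)) : ℂ :=
  ∑ i, (z i : ℂ) * Complex.exp (Complex.I * ((inner ℝ (x i) v : ℝ) : ℂ))

lemma charSum_continuous {n : ℕ} (x : Fin n → EuclideanSpace ℝ (Fin d)) (z : Fin n → ℝ) :
    Continuous (charSum x z) := by
  apply continuous_finset_sum
  intro i _
  exact continuous_const.mul (Complex.continuous_exp.comp
    (continuous_const.mul (Complex.continuous_ofReal.comp
      ((continuous_const.inner continuous_id)))))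

lemma charSum_ne {n : ℕ} (x : Fin n → EuclideanSpace ℝ (Fin d))
    (hx : Function.Injective x) (z : Fin n → ℝ) (hz : z ≠ 0) :
    ∃ v : EuclideanSpace ℝ (Fin d), charSum x z v ≠ 0 := by
  by_contra hF
  push_neg at hF
  have hinj : Function.Injective (fun i => char (x i)) := char_injective.comp hx
  have hli := (linearIndependent_monoidHom
      (Multiplicative (EuclideanSpace ℝ (Fin d))) ℂ).comp (fun i => char (x i)) hinj
  have hfun : ∑ i, (z i : ℂ) • (((fun f => ⇑f : (Multiplicative (EuclideanSpace ℝ (Fin d)) →* ℂ)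
        → Multiplicative (EuclideanSpace ℝ (Fin d)) → ℂ) ∘ fun i => char (x i)) i)
      = (0 : Multiplicative (EuclideanSpace ℝ (Fin d)) → ℂ) := by
    funext v
    have := hF (Multiplicative.toAdd v)
    simpa [charSum, char, Finset.sum_apply, smul_eq_mul] using this
  have hzero := Fintype.linearIndependent_iff.mp hli (fun i => (z i : ℂ)) hfun
  apply hz
  funext i
  simp only [Pi.zero_apply]
  have h0 : ((z i : ℂ)) = 0 := hzero i
  exact_mod_cast h0

lemma gauss_pointwise {n : ℕ} (x : Fin n → EuclideanSpace ℝ (Fin d)) (z : Fin n → ℝ)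
    (c : ℝ) (v : EuclideanSpace ℝ (Fin d)) :
    ∑ i, ∑ j, (z i : ℂ) * (z j : ℂ)
        * Complex.exp (-(c:ℂ) * ‖v‖^2 + Complex.I * ((inner ℝ (x i - x j) v : ℝ) : ℂ))
      = ((Real.exp (-c*‖v‖^2) * Complex.normSq (charSum x z v) : ℝ) : ℂ) := by
  have hconj : (starRingEnd ℂ) (charSum x z v)
      = ∑ j, (z j : ℂ) * Complex.exp (-(Complex.I * ((inner ℝ (x j) v : ℝ) : ℂ))) := by
    rw [charSum, map_sum]
    apply Finset.sum_congr rfl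
    intro j _
    rw [map_mul, Complex.conj_ofReal, ← Complex.exp_conj, map_mul, Complex.conj_I,
      Complex.conj_ofReal, neg_mul]
  rw [Complex.ofReal_mul, ← Complex.mul_conj, hconj]
  rw [charSum, Finset.sum_mul_sum, Complex.ofReal_exp, Finset.mul_sum]
  apply Finset.sum_congr rfl
  intro i _
  rw [Finset.mul_sum]
  apply Finset.sum_congr rfl
  intro j _
  rw [inner_sub_left]
  rw [show (-(c:ℂ) * ‖v‖^2 + Complex.I * (((inner ℝ (x i) v : ℝ) - (inner ℝ (x j) v : ℝ) : ℝ) : ℂ))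
      = ((-c*‖v‖^2 : ℝ) : ℂ) + (Complex.I * ((inner ℝ (x i) v : ℝ) : ℂ)
        + -(Complex.I * ((inner ℝ (x j) v : ℝ) : ℂ))) by push_cast; ring]
  rw [Complex.exp_add, Complex.exp_add]
  ring

lemma gauss_repr {n : ℕ} (x : Fin n → EuclideanSpace ℝ (Fin d)) (z : Fin n → ℝ)
    {c : ℝ} (hc : 0 < c) :
    ((π/c)^((d:ℝ)/2) : ℝ) * ∑ i, ∑ j, z i * z j * Real.exp (-‖x i - x j‖^2/(4*c))
      = ∫ v : EuclideanSpace ℝ (Fin d),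
          Real.exp (-c*‖v‖^2) * Complex.normSq (charSum x z v) := by
  have hcre : 0 < ((c:ℂ)).re := by simpa using hc
  have key : ∀ w : EuclideanSpace ℝ (Fin d),
      (∫ v : EuclideanSpace ℝ (Fin d),
          Complex.exp (-(c:ℂ) * ‖v‖^2 + Complex.I * ((inner ℝ w v : ℝ) : ℂ)))
        = (((π/c)^((d:ℝ)/2) : ℝ) : ℂ) * ((Real.exp (-‖w‖^2/(4*c)) : ℝ) : ℂ) := by
    intro w
    rw [GaussianFourier.integral_cexp_neg_mul_sq_norm_add hcre Complex.I w]
    rw [Complex.I_sq, finrank_euclideanSpace_fin]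
    rw [show ((π:ℂ)/(c:ℂ)) = ((π/c : ℝ) : ℂ) by push_cast; ring]
    rw [show ((d:ℂ)/2) = (((d:ℝ)/2 : ℝ) : ℂ) by push_cast; ring]
    rw [← Complex.ofReal_cpow (by positivity)]
    congr 1
    rw [Complex.ofReal_exp]
    congr 1
    push_cast
    ring
  apply Complex.ofReal_inj.mp
  calc ((((π/c)^((d:ℝ)/2) : ℝ) * ∑ i, ∑ j, z i * z j
            * Real.exp (-‖x i - x j‖^2/(4*c)) : ℝ) : ℂ)
      = ∑ i, ∑ j, (z i : ℂ) * (z j : ℂ)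
          * ((((π/c)^((d:ℝ)/2) : ℝ) : ℂ) * ((Real.exp (-‖x i - x j‖^2/(4*c)) : ℝ) : ℂ)) := by
        push_cast
        rw [Finset.mul_sum]
        refine Finset.sum_congr rfl fun i _ => ?_
        rw [Finset.mul_sum]
        exact Finset.sum_congr rfl fun j _ => by ring
    _ = ∑ i, ∑ j, ∫ v : EuclideanSpace ℝ (Fin d), (z i : ℂ) * (z j : ℂ)
          * Complex.exp (-(c:ℂ) * ‖v‖^2 + Complex.I * ((inner ℝ (x i - x j) v : ℝ) : ℂ)) := by
        apply Finset.sum_congr rfl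
        intro i _
        apply Finset.sum_congr rfl
        intro j _
        rw [← key (x i - x j), MeasureTheory.integral_const_mul]
    _ = ∫ v : EuclideanSpace ℝ (Fin d), ∑ i, ∑ j, (z i : ℂ) * (z j : ℂ)
          * Complex.exp (-(c:ℂ) * ‖v‖^2 + Complex.I * ((inner ℝ (x i - x j) v : ℝ) : ℂ)) := by
        rw [MeasureTheory.integral_finset_sum]
        · apply Finset.sum_congr rfl
          intro i _
          rw [MeasureTheory.integral_finset_sum]
          intro j _
          exact (GaussianFourier.integrable_cexp_neg_mul_sq_norm_add hcre Complex.I (x i - x j)).const_mul _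
        · intro i _
          apply MeasureTheory.integrable_finset_sum
          intro j _
          exact (GaussianFourier.integrable_cexp_neg_mul_sq_norm_add hcre Complex.I (x i - x j)).const_mul _
    _ = ∫ v : EuclideanSpace ℝ (Fin d),
          ((Real.exp (-c*‖v‖^2) * Complex.normSq (charSum x z v) : ℝ) : ℂ) := by
        apply MeasureTheory.integral_congr_ae
        filter_upwards with v
        exact gauss_pointwise x z c v
    _ = ((∫ v : EuclideanSpace ℝ (Fin d),
          Real.exp (-c*‖v‖^2) * Complex.normSq (charSum x z v) : ℝ) : ℂ) := by
        exact integral_ofReal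

lemma gauss_integrand_integrable {n : ℕ} (x : Fin n → EuclideanSpace ℝ (Fin d))
    (z : Fin n → ℝ) {c : ℝ} (hc : 0 < c) :
    MeasureTheory.Integrable (fun v : EuclideanSpace ℝ (Fin d) =>
      Real.exp (-c*‖v‖^2) * Complex.normSq (charSum x z v)) := by
  have hcre : 0 < ((c:ℂ)).re := by simpa using hc
  have hInt : MeasureTheory.Integrable (fun v : EuclideanSpace ℝ (Fin d) =>
      ∑ i, ∑ j, (z i : ℂ) * (z j : ℂ)
        * Complex.exp (-(c:ℂ) * ‖v‖^2 + Complex.I * ((inner ℝ (x i - x j) v : ℝ) : ℂ))) := by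
    apply MeasureTheory.integrable_finset_sum
    intro i _
    apply MeasureTheory.integrable_finset_sum
    intro j _
    exact (GaussianFourier.integrable_cexp_neg_mul_sq_norm_add hcre Complex.I (x i - x j)).const_mul _
  have := hInt.re
  apply this.congr
  filter_upwards with v
  simp only [gauss_pointwise x z c v, RCLike.re_eq_complex_re, Complex.ofReal_re]

lemma gauss_nonneg {n : ℕ} (x : Fin n → EuclideanSpace ℝ (Fin d)) (z : Fin n → ℝ)
    {c : ℝ} (hc : 0 < c) :
    0 ≤ ∑ i, ∑ j, z i * z j * Real.exp (-‖x i - x j‖^2/(4*c)) := by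
  have hC : (0:ℝ) < (π/c)^((d:ℝ)/2) := Real.rpow_pos_of_pos (div_pos Real.pi_pos hc) _
  have h := gauss_repr x z hc
  have hnn : 0 ≤ ∫ v : EuclideanSpace ℝ (Fin d),
      Real.exp (-c*‖v‖^2) * Complex.normSq (charSum x z v) :=
    MeasureTheory.integral_nonneg (fun v => mul_nonneg (Real.exp_pos _).le (Complex.normSq_nonneg _))
  nlinarith [h, hnn, hC]

lemma gauss_pos {n : ℕ} (x : Fin n → EuclideanSpace ℝ (Fin d))
    (hx : Function.Injective x) (z : Fin n → ℝ) (hz : z ≠ 0) {c : ℝ} (hc : 0 < c) :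
    0 < ∑ i, ∑ j, z i * z j * Real.exp (-‖x i - x j‖^2/(4*c)) := by
  have hC : (0:ℝ) < (π/c)^((d:ℝ)/2) := Real.rpow_pos_of_pos (div_pos Real.pi_pos hc) _
  have h := gauss_repr x z hc
  have hpos : 0 < ∫ v : EuclideanSpace ℝ (Fin d),
      Real.exp (-c*‖v‖^2) * Complex.normSq (charSum x z v) := by
    rw [MeasureTheory.integral_pos_iff_support_of_nonneg (fun v => mul_nonneg (Real.exp_pos _).le (Complex.normSq_nonneg _))
      (gauss_integrand_integrable x z hc)]
    obtain ⟨v₀, hv₀⟩ := charSum_ne x hx z hz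
    have hU : IsOpen {v : EuclideanSpace ℝ (Fin d) | charSum x z v ≠ 0} :=
      isOpen_compl_iff.mpr (isClosed_eq (charSum_continuous x z) continuous_const)
    have hsub : {v : EuclideanSpace ℝ (Fin d) | charSum x z v ≠ 0}
        ⊆ Function.support (fun v => Real.exp (-c*‖v‖^2) * Complex.normSq (charSum x z v)) := by
      intro v hv
      simp only [Function.mem_support]
      have : Complex.normSq (charSum x z v) ≠ 0 := fun h0 => hv (Complex.normSq_eq_zero.mp h0)
      positivity
    calc (0:ENNReal) < MeasureTheory.volume {v : EuclideanSpace ℝ (Fin d) | charSum x z v ≠ 0} :=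
          hU.measure_pos _ ⟨v₀, hv₀⟩
      _ ≤ _ := MeasureTheory.measure_mono hsub
  nlinarith [h, hpos, hC]

end Gauss


section MatrixPart

open Complex RealInnerProductSpace MeasureTheory Matrix

variable {d n : ℕ}

lemma exp_quad_rep (s : Fin n → EuclideanSpace ℝ (Fin d)) (z : Fin n → ℝ)
    {ρ : ℝ} (hρ : 0 < ρ) :
    ∑ i, ∑ j, z i * z j * (ρ * Real.exp (-‖s i - s j‖/ρ))
      = ∫ v in Ioi (0:ℝ), Real.exp (-v/ρ^2) / Real.sqrt (π*v)
          * ∑ i, ∑ j, z i * z j * Real.exp (-‖s i - s j‖^2/(4*v)) := by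
  have hInt : ∀ (i j : Fin n), IntegrableOn (fun v => Real.exp (-v/ρ^2) / Real.sqrt (π*v)
      * Real.exp (-‖s i - s j‖^2/(4*v))) (Ioi 0) := fun i j => subord_integrableOn _ hρ
  calc ∑ i, ∑ j, z i * z j * (ρ * Real.exp (-‖s i - s j‖/ρ))
      = ∑ i, ∑ j, z i * z j * ∫ v in Ioi (0:ℝ),
          Real.exp (-v/ρ^2)/Real.sqrt (π*v) * Real.exp (-‖s i - s j‖^2/(4*v)) := by
        refine Finset.sum_congr rfl fun i _ => Finset.sum_congr rfl fun j _ => ?_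
        rw [subord hρ (norm_nonneg _)]
    _ = ∑ i, ∑ j, ∫ v in Ioi (0:ℝ), z i * z j
          * (Real.exp (-v/ρ^2)/Real.sqrt (π*v) * Real.exp (-‖s i - s j‖^2/(4*v))) := by
        refine Finset.sum_congr rfl fun i _ => Finset.sum_congr rfl fun j _ => ?_
        rw [MeasureTheory.integral_const_mul]
    _ = ∫ v in Ioi (0:ℝ), ∑ i, ∑ j, z i * z j
          * (Real.exp (-v/ρ^2)/Real.sqrt (π*v) * Real.exp (-‖s i - s j‖^2/(4*v))) := by
        rw [MeasureTheory.integral_finset_sum _ (fun i _ =>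
          MeasureTheory.integrable_finset_sum _ (fun j _ => (hInt i j).const_mul _))]
        exact Finset.sum_congr rfl fun i _ =>
          (MeasureTheory.integral_finset_sum _ (fun j _ => (hInt i j).const_mul _)).symm
    _ = ∫ v in Ioi (0:ℝ), Real.exp (-v/ρ^2) / Real.sqrt (π*v)
          * ∑ i, ∑ j, z i * z j * Real.exp (-‖s i - s j‖^2/(4*v)) := by
        apply MeasureTheory.integral_congr_ae
        filter_upwards with v
        rw [Finset.mul_sum]
        refine Finset.sum_congr rfl fun i _ => ?_
        rw [Finset.mul_sum]
        exact Finset.sum_congr rfl fun j _ => by ring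

lemma weight_P_integrableOn (s : Fin n → EuclideanSpace ℝ (Fin d)) (z : Fin n → ℝ)
    {ρ : ℝ} (hρ : 0 < ρ) :
    IntegrableOn (fun v => Real.exp (-v/ρ^2) / Real.sqrt (π*v)
      * ∑ i, ∑ j, z i * z j * Real.exp (-‖s i - s j‖^2/(4*v))) (Ioi 0) := by
  apply IntegrableOn.congr_fun (f := fun v => ∑ i, ∑ j, z i * z j
    * (Real.exp (-v/ρ^2)/Real.sqrt (π*v) * Real.exp (-‖s i - s j‖^2/(4*v))))
  · exact MeasureTheory.integrable_finset_sum _ (fun i _ =>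
      MeasureTheory.integrable_finset_sum _ (fun j _ =>
        ((subord_integrableOn _ hρ).const_mul _)))
  · intro v _
    beta_reduce
    rw [Finset.mul_sum]
    refine Finset.sum_congr rfl fun i _ => ?_
    rw [Finset.mul_sum]
    exact Finset.sum_congr rfl fun j _ => by ring
  · exact measurableSet_Ioi

/-- Monotonicity of the quadratic form `∑ᵢⱼ zᵢ zⱼ ρ e^{-‖sᵢ-sⱼ‖/ρ}` in `ρ`. -/
lemma quad_mono (s : Fin n → EuclideanSpace ℝ (Fin d)) (z : Fin n → ℝ)
    {ρ₁ ρ₂ : ℝ} (hρ₁ : 0 < ρ₁) (h12 : ρ₁ ≤ ρ₂) :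
    ∑ i, ∑ j, z i * z j * (ρ₁ * Real.exp (-‖s i - s j‖/ρ₁))
      ≤ ∑ i, ∑ j, z i * z j * (ρ₂ * Real.exp (-‖s i - s j‖/ρ₂)) := by
  have hρ₂ : 0 < ρ₂ := lt_of_lt_of_le hρ₁ h12
  rw [exp_quad_rep s z hρ₁, exp_quad_rep s z hρ₂]
  apply MeasureTheory.setIntegral_mono_on (weight_P_integrableOn s z hρ₁)
    (weight_P_integrableOn s z hρ₂) measurableSet_Ioi
  intro v hv
  simp only [mem_Ioi] at hv
  have hsq : (0:ℝ) < Real.sqrt (π*v) := Real.sqrt_pos.2 (by positivity)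
  have hP : 0 ≤ ∑ i, ∑ j, z i * z j * Real.exp (-‖s i - s j‖^2/(4*v)) :=
    gauss_nonneg s z hv
  apply mul_le_mul_of_nonneg_right _ hP
  rw [div_le_div_iff_of_pos_right hsq]
  apply Real.exp_le_exp.2
  rw [neg_div, neg_div, neg_le_neg_iff, div_le_div_iff₀ (by positivity) (by positivity)]
  nlinarith [hv.le, pow_le_pow_left₀ hρ₁.le h12 2]

/-- Strict positive definiteness of the exponential-kernel quadratic form. -/
lemma exp_quad_pos (s : Fin n → EuclideanSpace ℝ (Fin d)) (hs : Function.Injective s)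
    (z : Fin n → ℝ) (hz : z ≠ 0) {ρ : ℝ} (hρ : 0 < ρ) :
    0 < ∑ i, ∑ j, z i * z j * Real.exp (-‖s i - s j‖/ρ) := by
  have hrep := exp_quad_rep s z hρ
  have hfac : ∑ i, ∑ j, z i * z j * (ρ * Real.exp (-‖s i - s j‖/ρ))
      = ρ * ∑ i, ∑ j, z i * z j * Real.exp (-‖s i - s j‖/ρ) := by
    rw [Finset.mul_sum]
    refine Finset.sum_congr rfl fun i _ => ?_
    rw [Finset.mul_sum]
    exact Finset.sum_congr rfl fun j _ => by ring
  have hpos : 0 < ∫ v in Ioi (0:ℝ), Real.exp (-v/ρ^2) / Real.sqrt (π*v)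
      * ∑ i, ∑ j, z i * z j * Real.exp (-‖s i - s j‖^2/(4*v)) := by
    rw [MeasureTheory.setIntegral_pos_iff_support_of_nonneg_ae _ (weight_P_integrableOn s z hρ)]
    · have hsub : Ioi (0:ℝ) ⊆ Function.support (fun v => Real.exp (-v/ρ^2) / Real.sqrt (π*v)
          * ∑ i, ∑ j, z i * z j * Real.exp (-‖s i - s j‖^2/(4*v))) ∩ Ioi 0 := by
        intro v hv
        have hv' : (0:ℝ) < v := hv
        refine ⟨?_, hv⟩
        simp only [Function.mem_support]
        have h1 : 0 < Real.exp (-v/ρ^2) / Real.sqrt (π*v) :=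
          div_pos (Real.exp_pos _) (Real.sqrt_pos.2 (by positivity))
        have h2 := gauss_pos s hs z hz hv'
        positivity
      calc (0:ENNReal) < MeasureTheory.volume (Ioi (0:ℝ)) := by
            rw [Real.volume_Ioi]; exact ENNReal.zero_lt_top
        _ ≤ _ := MeasureTheory.measure_mono hsub
    · filter_upwards [MeasureTheory.ae_restrict_mem measurableSet_Ioi] with v hv
      have hv' : (0:ℝ) < v := hv
      have h1 : 0 ≤ Real.exp (-v/ρ^2) / Real.sqrt (π*v) := by positivity
      simpa using mul_nonneg h1 (gauss_nonneg s z hv')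
  rw [← hrep, hfac] at hpos
  nlinarith [hpos, hρ]

/-- Loewner-type comparison of inverse quadratic forms. -/
lemma inv_quad_mono {A B : Matrix (Fin n) (Fin n) ℝ} (hA : A.PosDef) (hB : B.PosDef)
    (hAsym : Aᵀ = A)
    (hAB : ∀ x : Fin n → ℝ, x ⬝ᵥ (A *ᵥ x) ≤ x ⬝ᵥ (B *ᵥ x)) (z : Fin n → ℝ) :
    z ⬝ᵥ (B⁻¹ *ᵥ z) ≤ z ⬝ᵥ (A⁻¹ *ᵥ z) := by
  have hAdet : IsUnit A.det := isUnit_iff_ne_zero.2 (ne_of_gt hA.det_pos)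
  have hBdet : IsUnit B.det := isUnit_iff_ne_zero.2 (ne_of_gt hB.det_pos)
  set y := B⁻¹ *ᵥ z with hy
  set u := A⁻¹ *ᵥ z with hu
  have hAu : A *ᵥ u = z := by
    rw [hu, Matrix.mulVec_mulVec, Matrix.mul_nonsing_inv _ hAdet, Matrix.one_mulVec]
  have hBy : B *ᵥ y = z := by
    rw [hy, Matrix.mulVec_mulVec, Matrix.mul_nonsing_inv _ hBdet, Matrix.one_mulVec]
  have hq : 0 ≤ (y - u) ⬝ᵥ (A *ᵥ (y - u)) := by
    have h := hA.posSemidef.dotProduct_mulVec_nonneg (y - u)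
    simpa using h
  have hcross : u ⬝ᵥ (A *ᵥ y) = z ⬝ᵥ y := by
    rw [Matrix.dotProduct_mulVec, ← Matrix.mulVec_transpose, hAsym, hAu]
  have hexp : (y - u) ⬝ᵥ (A *ᵥ (y - u))
      = y ⬝ᵥ (A *ᵥ y) - y ⬝ᵥ z - z ⬝ᵥ y + u ⬝ᵥ z := by
    rw [Matrix.mulVec_sub, sub_dotProduct, dotProduct_sub,
      dotProduct_sub, hAu, hcross]
    ring_nf
  have hyz : y ⬝ᵥ z = z ⬝ᵥ y := dotProduct_comm y z
  have hBq : y ⬝ᵥ (A *ᵥ y) ≤ y ⬝ᵥ z := by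
    have := hAB y
    rwa [hBy] at this
  have huz : z ⬝ᵥ y ≤ u ⬝ᵥ z := by
    rw [hexp] at hq
    linarith [hq, hBq, hyz]
  calc z ⬝ᵥ (B⁻¹ *ᵥ z) = z ⬝ᵥ y := rfl
    _ ≤ u ⬝ᵥ z := by linarith [huz, dotProduct_comm z y]
    _ = z ⬝ᵥ u := dotProduct_comm u z
    _ = z ⬝ᵥ (A⁻¹ *ᵥ z) := rfl

lemma dot_mulVec_eq (M : Matrix (Fin n) (Fin n) ℝ) (z : Fin n → ℝ) :
    z ⬝ᵥ (M *ᵥ z) = ∑ i, ∑ j, z i * z j * M i j := by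
  simp only [dotProduct, Matrix.mulVec, Finset.mul_sum]
  exact Finset.sum_congr rfl fun i _ => Finset.sum_congr rfl fun j _ => by ring

end MatrixPart

end KSaux

end KSaux

open Matrix

/-- Lemma 1 of Kaufman & Shaby (ν = 1/2): monotonicity in ρ of the quadratic form
`zᵀ Γₙ(ρ)⁻¹ z / ρ`, where `Γₙ(ρ)` is the exponential (Matérn ν = 1/2) correlation matrix. -/
theorem fixed_range_quadratic_form_antitone_nu_half
    (d n : ℕ) (hd : 1 ≤ d)
    (s : Fin n → EuclideanSpace ℝ (Fin d)) (hs : Function.Injective s)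
    (ρ₁ ρ₂ : ℝ) (hρ₁ : 0 < ρ₁) (hρ₁₂ : ρ₁ < ρ₂)
    (z : Fin n → ℝ) :
    (1 / ρ₂) * (z ⬝ᵥ ((Matrix.of fun i j => Real.exp (-‖s i - s j‖ / ρ₂))⁻¹ *ᵥ z))
      ≤ (1 / ρ₁) * (z ⬝ᵥ ((Matrix.of fun i j => Real.exp (-‖s i - s j‖ / ρ₁))⁻¹ *ᵥ z)) := by
  have hρ₂ : 0 < ρ₂ := hρ₁.trans hρ₁₂
  -- positive definiteness of the scaled matrices
  have hPD : ∀ ρ : ℝ, 0 < ρ →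
      (ρ • (Matrix.of fun i j => Real.exp (-‖s i - s j‖ / ρ)) :
        Matrix (Fin n) (Fin n) ℝ).PosDef := by
    intro ρ hρ
    rw [Matrix.posDef_iff_dotProduct_mulVec]
    constructor
    · ext i j
      simp only [conjTranspose_apply, Matrix.smul_apply, of_apply, star_trivial, smul_eq_mul,
        norm_sub_rev]
    · intro x hx
      have hq := KSaux.exp_quad_pos s hs x hx hρ
      have : star x ⬝ᵥ ((ρ • (Matrix.of fun i j => Real.exp (-‖s i - s j‖ / ρ))) *ᵥ x)
          = ρ * ∑ i, ∑ j, x i * x j * Real.exp (-‖s i - s j‖ / ρ) := by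
        rw [star_trivial, smul_mulVec, dotProduct_smul, smul_eq_mul,
          KSaux.dot_mulVec_eq]
        congr 1
      rw [this]
      positivity
  have hPD₁ := hPD ρ₁ hρ₁
  have hPD₂ := hPD ρ₂ hρ₂
  -- symmetry
  have hsym : (ρ₁ • (Matrix.of fun i j => Real.exp (-‖s i - s j‖ / ρ₁)) :
      Matrix (Fin n) (Fin n) ℝ)ᵀ
      = ρ₁ • (Matrix.of fun i j => Real.exp (-‖s i - s j‖ / ρ₁)) := by
    ext i j
    simp only [transpose_apply, Matrix.smul_apply, of_apply, smul_eq_mul, norm_sub_rev]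
  -- comparison of quadratic forms
  have hAB : ∀ x : Fin n → ℝ,
      x ⬝ᵥ ((ρ₁ • (Matrix.of fun i j => Real.exp (-‖s i - s j‖ / ρ₁))) *ᵥ x)
        ≤ x ⬝ᵥ ((ρ₂ • (Matrix.of fun i j => Real.exp (-‖s i - s j‖ / ρ₂))) *ᵥ x) := by
    intro x
    have h1 : ∀ (ρ : ℝ), x ⬝ᵥ ((ρ • (Matrix.of fun i j => Real.exp (-‖s i - s j‖ / ρ))) *ᵥ x)
        = ∑ i, ∑ j, x i * x j * (ρ * Real.exp (-‖s i - s j‖ / ρ)) := by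
      intro ρ
      rw [smul_mulVec, dotProduct_smul, smul_eq_mul, KSaux.dot_mulVec_eq, Finset.mul_sum]
      refine Finset.sum_congr rfl fun i _ => ?_
      rw [Finset.mul_sum]
      exact Finset.sum_congr rfl fun j _ => by simp only [of_apply]; ring
    rw [h1 ρ₁, h1 ρ₂]
    exact KSaux.quad_mono s x hρ₁ hρ₁₂.le
  have hmain := KSaux.inv_quad_mono hPD₁ hPD₂ hsym hAB z
  -- rewrite the inverses of the scaled matrices
  have hinv : ∀ ρ : ℝ, 0 < ρ →
      (ρ • (Matrix.of fun i j => Real.exp (-‖s i - s j‖ / ρ)) :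
        Matrix (Fin n) (Fin n) ℝ)⁻¹
      = ρ⁻¹ • (Matrix.of fun i j => Real.exp (-‖s i - s j‖ / ρ))⁻¹ := by
    intro ρ hρ
    have hdet : IsUnit (Matrix.of fun i j => Real.exp (-‖s i - s j‖ / ρ) :
        Matrix (Fin n) (Fin n) ℝ).det := by
      have hPDΓ : (Matrix.of fun i j => Real.exp (-‖s i - s j‖ / ρ) :
          Matrix (Fin n) (Fin n) ℝ).PosDef := by
        rw [Matrix.posDef_iff_dotProduct_mulVec]
        constructor
        · ext i j
          simp only [conjTranspose_apply, of_apply, star_trivial, norm_sub_rev]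
        · intro x hx
          have hq := KSaux.exp_quad_pos s hs x hx hρ
          rw [star_trivial, KSaux.dot_mulVec_eq]
          simpa only [of_apply] using hq
      exact isUnit_iff_ne_zero.2 (ne_of_gt hPDΓ.det_pos)
    apply Matrix.inv_eq_right_inv
    rw [Matrix.smul_mul, Matrix.mul_smul, smul_smul, Matrix.mul_nonsing_inv _ hdet,
      mul_inv_cancel₀ (ne_of_gt hρ), one_smul]
  rw [hinv ρ₁ hρ₁, hinv ρ₂ hρ₂] at hmain
  rw [smul_mulVec, dotProduct_smul, smul_eq_mul] at hmain
  rw [smul_mulVec, dotProduct_smul, smul_eq_mul] at hmain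
  rw [one_div, one_div]
  exact hmain
end

section
/- Let d ≥ 1 and let f_1, f_2 : ℝ^d → ℝ be integrable functions with 0 ≤ f_1(ω) ≤ f_2(ω) for almost every ω, and with each f_j even (f_j(−ω) = f_j(ω)). Define K_j(x) = ∫_{ℝ^d} e^{i⟨ω,x⟩} f_j(ω) dω (a real-valued function by evenness). Let s_1, …, s_n ∈ ℝ^d and let Γ_j be the n×n matrix with entries K_j(s_a − s_b). If Γ_1 and Γ_2 are both positive definite, then for every z ∈ ℝ^n, zᵀ Γ_2⁻¹ z ≤ zᵀ Γ_1⁻¹ z. (This is the abstract spectral-comparison argument underlying the proof of the paper's Lemma 1: pointwise ordering of spectral densities implies the reverse Loewner ordering of inverse covariance matrices.) -/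
open Matrix MeasureTheory
open scoped RealInnerProductSpace

noncomputable def gfun {d n : ℕ} (s : Fin n → EuclideanSpace ℝ (Fin d)) (x : Fin n → ℝ)
    (ω : EuclideanSpace ℝ (Fin d)) : ℂ :=
  ∑ a, (x a : ℂ) * Complex.exp (Complex.I * (⟪ω, s a⟫ : ℝ))

lemma gfun_continuous {d n : ℕ} (s : Fin n → EuclideanSpace ℝ (Fin d)) (x : Fin n → ℝ) :
    Continuous (gfun s x) := by
  refine continuous_finset_sum _ fun a _ => continuous_const.mul ?_
  exact Complex.continuous_exp.comp (continuous_const.mul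
    (Complex.continuous_ofReal.comp (continuous_id.inner continuous_const)))

lemma normSq_mul_integrable {d n : ℕ} (f : EuclideanSpace ℝ (Fin d) → ℝ) (hf : Integrable f)
    (s : Fin n → EuclideanSpace ℝ (Fin d)) (x : Fin n → ℝ) :
    Integrable (fun ω => Complex.normSq (gfun s x ω) * f ω) := by
  apply Integrable.bdd_mul (c := (∑ a, |x a|) ^ 2) hf
  · exact (Complex.continuous_normSq.comp (gfun_continuous s x)).aestronglyMeasurable
  · refine Filter.Eventually.of_forall fun ω => ?_
    rw [Real.norm_eq_abs, abs_of_nonneg (Complex.normSq_nonneg _),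
      Complex.normSq_eq_norm_sq]
    have habs : ‖gfun s x ω‖ ≤ ∑ a, |x a| := by
      refine (norm_sum_le _ _).trans ?_
      refine Finset.sum_le_sum fun a _ => ?_
      rw [norm_mul, Complex.norm_exp]
      simp
    exact pow_le_pow_left₀ (norm_nonneg _) habs 2

lemma exp_integrable {d : ℕ} (f : EuclideanSpace ℝ (Fin d) → ℝ) (hf : Integrable f)
    (v : EuclideanSpace ℝ (Fin d)) :
    Integrable (fun ω => Complex.exp (Complex.I * (⟪ω, v⟫ : ℝ)) * (f ω : ℂ)) := by
  apply Integrable.bdd_mul (c := 1) (hf.ofReal)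
  · exact (Complex.continuous_exp.comp ((continuous_const.mul
      ((Complex.continuous_ofReal.comp ((continuous_id.inner continuous_const))))))).aestronglyMeasurable
  · refine Filter.Eventually.of_forall fun ω => ?_
    rw [Complex.norm_exp]
    simp

lemma quad_eq {d n : ℕ} (f : EuclideanSpace ℝ (Fin d) → ℝ) (hf : Integrable f)
    (s : Fin n → EuclideanSpace ℝ (Fin d)) (Γ : Matrix (Fin n) (Fin n) ℝ)
    (hΓ : ∀ a b, Γ a b =
      (∫ ω : EuclideanSpace ℝ (Fin d),
        Complex.exp (Complex.I * (⟪ω, s a - s b⟫ : ℝ)) * f ω).re)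
    (x : Fin n → ℝ) :
    x ⬝ᵥ (Γ *ᵥ x) = ∫ ω, Complex.normSq (gfun s x ω) * f ω := by
  have key : ∀ ω : EuclideanSpace ℝ (Fin d),
      ∑ a, ∑ b, ((x a : ℂ) * x b *
        (Complex.exp (Complex.I * (⟪ω, s a - s b⟫ : ℝ)) * (f ω : ℂ)))
      = ((Complex.normSq (gfun s x ω) * f ω : ℝ) : ℂ) := by
    intro ω
    have hsplit : ∀ a b : Fin n,
        Complex.exp (Complex.I * (⟪ω, s a - s b⟫ : ℝ))
        = Complex.exp (Complex.I * (⟪ω, s a⟫ : ℝ)) *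
          (starRingEnd ℂ) (Complex.exp (Complex.I * (⟪ω, s b⟫ : ℝ))) := by
      intro a b
      rw [← Complex.exp_conj, ← Complex.exp_add]
      congr 1
      simp only [_root_.map_mul, Complex.conj_I, Complex.conj_ofReal, inner_sub_right,
        Complex.ofReal_sub]
      ring
    have hgg : gfun s x ω * (starRingEnd ℂ) (gfun s x ω)
        = ∑ a, ∑ b, ((x a : ℂ) * x b *
          (Complex.exp (Complex.I * (⟪ω, s a⟫ : ℝ)) *
            (starRingEnd ℂ) (Complex.exp (Complex.I * (⟪ω, s b⟫ : ℝ))))) := by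
      rw [gfun, map_sum, Finset.sum_mul_sum]
      refine Finset.sum_congr rfl fun a _ => Finset.sum_congr rfl fun b _ => ?_
      simp only [_root_.map_mul, Complex.conj_ofReal]
      ring
    rw [Complex.ofReal_mul, ← Complex.mul_conj, hgg, Finset.sum_mul]
    refine Finset.sum_congr rfl fun a _ => ?_
    rw [Finset.sum_mul]
    refine Finset.sum_congr rfl fun b _ => ?_
    rw [hsplit a b]; ring
  have hint : ∀ a b : Fin n, Integrable (fun ω => (x a : ℂ) * x b *
      (Complex.exp (Complex.I * (⟪ω, s a - s b⟫ : ℝ)) * (f ω : ℂ))) :=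
    fun a b => ((exp_integrable f hf (s a - s b)).const_mul _)
  have h1 : x ⬝ᵥ (Γ *ᵥ x) = (∑ a, ∑ b, ∫ ω, ((x a : ℂ) * x b *
      (Complex.exp (Complex.I * (⟪ω, s a - s b⟫ : ℝ)) * (f ω : ℂ)))).re := by
    simp only [dotProduct, mulVec, dotProduct, Complex.re_sum, Finset.mul_sum]
    refine Finset.sum_congr rfl fun a _ => Finset.sum_congr rfl fun b _ => ?_
    rw [hΓ a b]
    have : (∫ ω, ((x a : ℂ) * x b *
        (Complex.exp (Complex.I * (⟪ω, s a - s b⟫ : ℝ)) * (f ω : ℂ))))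
        = ((x a : ℂ) * x b) * ∫ ω,
          (Complex.exp (Complex.I * (⟪ω, s a - s b⟫ : ℝ)) * (f ω : ℂ)) :=
      integral_const_mul _ _
    rw [this, ← Complex.ofReal_mul, Complex.re_ofReal_mul]
    ring
  have h2 : (∑ a, ∑ b, ∫ ω, ((x a : ℂ) * x b *
      (Complex.exp (Complex.I * (⟪ω, s a - s b⟫ : ℝ)) * (f ω : ℂ))))
      = ∫ ω, ((Complex.normSq (gfun s x ω) * f ω : ℝ) : ℂ) := by
    calc _ = ∑ a, ∫ ω, ∑ b, ((x a : ℂ) * x b *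
          (Complex.exp (Complex.I * (⟪ω, s a - s b⟫ : ℝ)) * (f ω : ℂ))) :=
        Finset.sum_congr rfl fun a _ =>
          (integral_finset_sum _ (fun b _ => hint a b)).symm
      _ = ∫ ω, ∑ a, ∑ b, ((x a : ℂ) * x b *
          (Complex.exp (Complex.I * (⟪ω, s a - s b⟫ : ℝ)) * (f ω : ℂ))) :=
        (integral_finset_sum _ (fun a _ =>
          integrable_finset_sum _ (fun b _ => hint a b))).symm
      _ = _ := by simp_rw [key]
  have h3 : (∫ ω, ((Complex.normSq (gfun s x ω) * f ω : ℝ) : ℂ))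
      = ((∫ ω, Complex.normSq (gfun s x ω) * f ω : ℝ) : ℂ) := integral_ofReal
  rw [h1, h2, h3, Complex.ofReal_re]

/-- The abstract spectral-comparison argument underlying Lemma 1 of Kaufman & Shaby:
if two integrable, even spectral densities satisfy `0 ≤ f₁ ≤ f₂` a.e., and `Γ₁, Γ₂` are
the (positive definite) kernel matrices of their inverse Fourier transforms at locations
`s₁, …, sₙ`, then `zᵀ Γ₂⁻¹ z ≤ zᵀ Γ₁⁻¹ z` for every `z`. -/
theorem inverse_quadratic_form_le_of_spectral_density_le
    (d n : ℕ) (hd : 1 ≤ d)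
    (f₁ f₂ : EuclideanSpace ℝ (Fin d) → ℝ)
    (hf₁ : Integrable f₁) (hf₂ : Integrable f₂)
    (hle : ∀ᵐ ω, 0 ≤ f₁ ω ∧ f₁ ω ≤ f₂ ω)
    (heven₁ : ∀ ω, f₁ (-ω) = f₁ ω) (heven₂ : ∀ ω, f₂ (-ω) = f₂ ω)
    (s : Fin n → EuclideanSpace ℝ (Fin d))
    (Γ₁ Γ₂ : Matrix (Fin n) (Fin n) ℝ)
    (hΓ₁ : ∀ a b, Γ₁ a b =
      (∫ ω : EuclideanSpace ℝ (Fin d),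
        Complex.exp (Complex.I * (⟪ω, s a - s b⟫ : ℝ)) * f₁ ω).re)
    (hΓ₂ : ∀ a b, Γ₂ a b =
      (∫ ω : EuclideanSpace ℝ (Fin d),
        Complex.exp (Complex.I * (⟪ω, s a - s b⟫ : ℝ)) * f₂ ω).re)
    (hpd₁ : Γ₁.PosDef) (hpd₂ : Γ₂.PosDef)
    (z : Fin n → ℝ) :
    z ⬝ᵥ (Γ₂⁻¹ *ᵥ z) ≤ z ⬝ᵥ (Γ₁⁻¹ *ᵥ z) := by
  have hmono : ∀ x : Fin n → ℝ, x ⬝ᵥ (Γ₁ *ᵥ x) ≤ x ⬝ᵥ (Γ₂ *ᵥ x) := by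
    intro x
    rw [quad_eq f₁ hf₁ s Γ₁ hΓ₁ x, quad_eq f₂ hf₂ s Γ₂ hΓ₂ x]
    refine integral_mono_ae (normSq_mul_integrable f₁ hf₁ s x)
      (normSq_mul_integrable f₂ hf₂ s x) ?_
    filter_upwards [hle] with ω hω
    exact mul_le_mul_of_nonneg_left hω.2 (Complex.normSq_nonneg _)
  set x := Γ₂⁻¹ *ᵥ z with hx
  set y := Γ₁⁻¹ *ᵥ z with hy
  have hB : Γ₂ *ᵥ x = z := by
    rw [hx, mulVec_mulVec, mul_nonsing_inv _ (isUnit_iff_ne_zero.mpr hpd₂.det_pos.ne'),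
      one_mulVec]
  have hA : Γ₁ *ᵥ y = z := by
    rw [hy, mulVec_mulVec, mul_nonsing_inv _ (isUnit_iff_ne_zero.mpr hpd₁.det_pos.ne'),
      one_mulVec]
  have hsym : Γ₁ᵀ = Γ₁ := by
    have := hpd₁.1
    rwa [Matrix.IsHermitian, conjTranspose_eq_transpose_of_trivial] at this
  have hvm : y ᵥ* Γ₁ = z := by rw [← hsym, vecMul_transpose, hA]
  have h0 : 0 ≤ (x - y) ⬝ᵥ (Γ₁ *ᵥ (x - y)) := by
    have := hpd₁.posSemidef.dotProduct_mulVec_nonneg (x - y)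
    simpa using this
  have hexp : (x - y) ⬝ᵥ (Γ₁ *ᵥ (x - y))
      = x ⬝ᵥ (Γ₁ *ᵥ x) - x ⬝ᵥ z - z ⬝ᵥ x + y ⬝ᵥ z := by
    rw [mulVec_sub, dotProduct_sub, sub_dotProduct, sub_dotProduct, hA]
    have : y ⬝ᵥ (Γ₁ *ᵥ x) = z ⬝ᵥ x := by rw [dotProduct_mulVec, hvm]
    rw [this]
    ring
  have hq2 : x ⬝ᵥ (Γ₂ *ᵥ x) = x ⬝ᵥ z := by rw [hB]
  have hc1 : z ⬝ᵥ x = x ⬝ᵥ z := dotProduct_comm _ _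
  have hc2 : z ⬝ᵥ y = y ⬝ᵥ z := dotProduct_comm _ _
  have hm := hmono x
  linarith [h0, hexp ▸ h0]
end
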